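/- Telescoping Fourier sum: let n ≥ 4, set μ_k := 2(1 − cos(2πk/n)) and λ_n := 1 − cos(2π/n). Then ∑_{k=2}^{n−2} 1/(μ_k/λ_n − 2) = 3/4 − (1/4)tan²(π/n). Equivalently, ∑_{k=2}^{n−2} sin²(π/n)/(2 sin((k−1)π/n) sin((k+1)π/n)) = 3/4 − (1/4)tan²(π/n). -/

import Mathlib

/-- Telescoping Fourier sum: for `n ≥ 4`, with `μ_k = 2(1 - cos(2πk/n))` and
`λ_n = 1 - cos(2π/n)`, one has
`∑_{k=2}^{n-2} 1/(μ_k/λ_n - 2) = 3/4 - (1/4)tan²(π/n)`; equivalently,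
`∑_{k=2}^{n-2} sin²(π/n)/(2 sin((k-1)π/n) sin((k+1)π/n)) = 3/4 - (1/4)tan²(π/n)`. -/
theorem telescoping_fourier_sum (n : ℕ) (hn : 4 ≤ n) :
    (∑ k ∈ Finset.Icc 2 (n - 2),
        1 / (2 * (1 - Real.cos (2 * Real.pi * k / n)) / (1 - Real.cos (2 * Real.pi / n)) - 2) =
      3 / 4 - 1 / 4 * Real.tan (Real.pi / n) ^ 2) ∧
    (∑ k ∈ Finset.Icc 2 (n - 2),
        Real.sin (Real.pi / n) ^ 2 /
          (2 * Real.sin (((k : ℝ) - 1) * Real.pi / n) * Real.sin (((k : ℝ) + 1) * Real.pi / n)) =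
      3 / 4 - 1 / 4 * Real.tan (Real.pi / n) ^ 2) := by
  have hπ : 0 < Real.pi := Real.pi_pos
  have hn0 : (0:ℝ) < n := by
    have : (4:ℝ) ≤ n := by exact_mod_cast hn
    linarith
  set θ := Real.pi / n with hθdef
  have hθpos : 0 < θ := div_pos hπ hn0
  have hnθ : (n:ℝ) * θ = Real.pi := by
    rw [hθdef]; field_simp
  have hθlt : θ < Real.pi / 2 := by
    rw [hθdef]
    have h4 : (4:ℝ) ≤ n := by exact_mod_cast hn
    rw [div_lt_div_iff₀ hn0 (by norm_num : (0:ℝ) < 2)]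
    nlinarith
  have hc : 0 < Real.cos θ := Real.cos_pos_of_mem_Ioo ⟨by linarith, hθlt⟩
  have hs : 0 < Real.sin θ := Real.sin_pos_of_pos_of_lt_pi hθpos (by linarith)
  have hsinm : ∀ x : ℝ, 0 < x → x < n → 0 < Real.sin (x * θ) := by
    intro x hx hxn
    apply Real.sin_pos_of_pos_of_lt_pi (by positivity)
    calc x * θ < n * θ := mul_lt_mul_of_pos_right hxn hθpos
      _ = Real.pi := hnθ
  have hpy : Real.sin θ ^ 2 + Real.cos θ ^ 2 = 1 := Real.sin_sq_add_cos_sq θ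
  set g : ℕ → ℝ := fun m => Real.cos (m * θ) / Real.sin (m * θ) with hgdef
  -- key pointwise identity
  have key : ∀ k : ℕ, k ∈ Finset.Icc 2 (n - 2) →
      (1 / (2 * (1 - Real.cos (2 * Real.pi * k / n)) / (1 - Real.cos (2 * Real.pi / n)) - 2)
        = Real.tan θ / 4 *
          (Real.cos (((k:ℝ) - 1) * θ) / Real.sin (((k:ℝ) - 1) * θ)
            - Real.cos (((k:ℝ) + 1) * θ) / Real.sin (((k:ℝ) + 1) * θ))) ∧
      (Real.sin θ ^ 2 /
          (2 * Real.sin (((k:ℝ) - 1) * Real.pi / n) * Real.sin (((k:ℝ) + 1) * Real.pi / n))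
        = Real.tan θ / 4 *
          (Real.cos (((k:ℝ) - 1) * θ) / Real.sin (((k:ℝ) - 1) * θ)
            - Real.cos (((k:ℝ) + 1) * θ) / Real.sin (((k:ℝ) + 1) * θ))) := by
    intro k hk
    rw [Finset.mem_Icc] at hk
    have hk2 : (2:ℝ) ≤ k := by exact_mod_cast hk.1
    have hkn : (k:ℝ) ≤ (n:ℝ) - 2 := by
      have h := hk.2
      have : (k:ℝ) ≤ ((n-2 : ℕ) : ℝ) := by exact_mod_cast h
      rwa [Nat.cast_sub (by omega)] at this
    set a : ℝ := ((k:ℝ) - 1) * θ with hadef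
    set b : ℝ := ((k:ℝ) + 1) * θ with hbdef
    have hsa : 0 < Real.sin a := hsinm _ (by linarith) (by linarith)
    have hsb : 0 < Real.sin b := hsinm _ (by linarith) (by linarith)
    have hab1 : 2 * Real.pi * k / n = a + b := by
      rw [hadef, hbdef, hθdef]; field_simp; ring
    have hab2 : 2 * Real.pi / n = θ + θ := by
      rw [hθdef]; ring
    have hba : b - a = θ + θ := by rw [hadef, hbdef]; ring
    have hax : a = (k:ℝ) * θ - θ := by rw [hadef]; ring
    have hbx : b = (k:ℝ) * θ + θ := by rw [hbdef]; ring
    have hS : Real.sin ((k:ℝ)*θ) ^ 2 + Real.cos ((k:ℝ)*θ) ^ 2 = 1 :=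
      Real.sin_sq_add_cos_sq _
    have hsin2 : Real.sin b * Real.cos a - Real.cos b * Real.sin a
        = 2 * Real.sin θ * Real.cos θ := by
      have h := Real.sin_sub b a
      rw [hba, Real.sin_add] at h
      linarith
    have hden : 1 - (Real.cos θ * Real.cos θ - Real.sin θ * Real.sin θ)
        = 2 * Real.sin θ ^ 2 := by linear_combination -hpy
    have hnum : 2 * (1 - (Real.cos a * Real.cos b - Real.sin a * Real.sin b))
        = 2 * (2 * Real.sin θ ^ 2) + 4 * (Real.sin a * Real.sin b) := by
      rw [hax, hbx, Real.sin_sub, Real.cos_sub, Real.sin_add, Real.cos_add]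
      linear_combination (2 * Real.sin θ ^ 2 - 2 * Real.cos θ ^ 2) * hS - 2 * hpy
    have hprod : 2 * (1 - Real.cos (2 * Real.pi * k / n)) / (1 - Real.cos (2 * Real.pi / n)) - 2
        = 2 * Real.sin a * Real.sin b / Real.sin θ ^ 2 := by
      rw [hab1, hab2, Real.cos_add a b, Real.cos_add θ θ, hden, hnum]
      field_simp
      ring
    have hcot : Real.cos a / Real.sin a - Real.cos b / Real.sin b
        = 2 * Real.sin θ * Real.cos θ / (Real.sin a * Real.sin b) := by
      field_simp
      linarith [hsin2]
    have htan : Real.tan θ = Real.sin θ / Real.cos θ := Real.tan_eq_sin_div_cos θ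
    constructor
    · rw [hprod, hcot, one_div_div, htan]
      field_simp
      ring
    · have e1 : ((k:ℝ) - 1) * Real.pi / n = a := by rw [hadef, hθdef]; ring
      have e2 : ((k:ℝ) + 1) * Real.pi / n = b := by rw [hbdef, hθdef]; ring
      rw [e1, e2, hcot, htan]
      field_simp
      ring
  -- values of g
  have hg1 : g 1 = Real.cos θ / Real.sin θ := by rw [hgdef]; norm_num
  have hg2 : g 2 = Real.cos (2*θ) / Real.sin (2*θ) := by rw [hgdef]; norm_num
  have hgn2 : g (n-2) = - g 2 := by
    have harg : ((n-2:ℕ):ℝ) * θ = Real.pi - 2*θ := by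
      rw [Nat.cast_sub (by omega : 2 ≤ n)]
      push_cast
      rw [sub_mul, hnθ]
    rw [hgdef]
    simp only
    rw [harg, Real.cos_pi_sub, Real.sin_pi_sub]
    push_cast
    ring
  have hgn1 : g (n-1) = - g 1 := by
    have harg : ((n-1:ℕ):ℝ) * θ = Real.pi - θ := by
      rw [Nat.cast_sub (by omega : 1 ≤ n)]
      push_cast
      rw [sub_mul, hnθ]
      ring
    rw [hgdef]
    simp only
    rw [harg, Real.cos_pi_sub, Real.sin_pi_sub]
    push_cast
    ring
  have hs2 : 0 < Real.sin (2*θ) := by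
    rw [Real.sin_two_mul]; positivity
  -- telescoping and final value
  have main : ∑ i ∈ Finset.range (n-3), Real.tan θ / 4 * (g (i+1) - g (i+3))
      = 3 / 4 - 1 / 4 * Real.tan θ ^ 2 := by
    rw [← Finset.mul_sum]
    have e1 := Finset.sum_range_sub' (fun i => g (i+1)) (n-3)
    have e2 := Finset.sum_range_sub' (fun i => g (i+2)) (n-3)
    have tele : ∑ i ∈ Finset.range (n-3), (g (i+1) - g (i+3))
        = g 1 + g 2 - g (n-3+1) - g (n-3+2) := by
      calc ∑ i ∈ Finset.range (n-3), (g (i+1) - g (i+3))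
          = ∑ i ∈ Finset.range (n-3), ((g (i+1) - g (i+1+1)) + (g (i+2) - g (i+1+2))) := by
            apply Finset.sum_congr rfl
            intro i _
            rw [show i+1+1 = i+2 from rfl, show i+1+2 = i+3 from rfl]
            ring
        _ = (g (0+1) - g (n-3+1)) + (g (0+2) - g (n-3+2)) := by
            rw [Finset.sum_add_distrib, e1, e2]
        _ = g 1 + g 2 - g (n-3+1) - g (n-3+2) := by norm_num; ring
    rw [tele, show n-3+1 = n-2 by omega, show n-3+2 = n-1 by omega, hgn2, hgn1,
      hg1, hg2, Real.tan_eq_sin_div_cos, Real.sin_two_mul, Real.cos_two_mul]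
    field_simp
    linear_combination 2 * hpy
  constructor
  · rw [Finset.sum_congr rfl (fun k hk => (key k hk).1), ← Finset.Ico_add_one_right_eq_Icc,
      Finset.sum_Ico_eq_sum_range, show n-2+1-2 = n-3 by omega]
    rw [← main]
    apply Finset.sum_congr rfl
    intro i _
    have c1 : ((2+i:ℕ):ℝ) - 1 = ((i+1:ℕ):ℝ) := by push_cast; ring
    have c2 : ((2+i:ℕ):ℝ) + 1 = ((i+3:ℕ):ℝ) := by push_cast; ring
    rw [hgdef]
    simp only
    rw [c1, c2]
  · rw [Finset.sum_congr rfl (fun k hk => (key k hk).2), ← Finset.Ico_add_one_right_eq_Icc,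
      Finset.sum_Ico_eq_sum_range, show n-2+1-2 = n-3 by omega]
    rw [← main]
    apply Finset.sum_congr rfl
    intro i _
    have c1 : ((2+i:ℕ):ℝ) - 1 = ((i+1:ℕ):ℝ) := by push_cast; ring
    have c2 : ((2+i:ℕ):ℝ) + 1 = ((i+3:ℕ):ℝ) := by push_cast; ring
    rw [hgdef]
    simp only
    rw [c1, c2]
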